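/- There exist universal constants c > 0 and C > 0 such that for all positive integers n, s with n ≥ 2 and s ≤ n, there exists a (1, c/s, 1/4)-error-correcting data structure for the s-out-of-n Membership problem of length at most C · s · log₂ n. -/

import Mathlib

open Finset

section setup
variable {n t b : ℕ}

/-- The set of cells (block, value) hit by elements of `S`. -/
def Gam (h : Fin t → Fin n → Fin b) (S : Finset (Fin n)) : Finset (Fin t × Fin b) :=
  Finset.univ.biUnion (fun j => (S.image (h j)).image (fun v => (j, v)))

lemma mem_Gam {h : Fin t → Fin n → Fin b} {S : Finset (Fin n)} {j : Fin t} {v : Fin b} :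
    (j, v) ∈ Gam h S ↔ v ∈ S.image (h j) := by
  constructor
  · intro hm
    rcases Finset.mem_biUnion.1 hm with ⟨j', _, hj'⟩
    rcases Finset.mem_image.1 hj' with ⟨v', hv', he⟩
    cases he; exact hv'
  · intro hv
    exact Finset.mem_biUnion.2 ⟨j, Finset.mem_univ j, Finset.mem_image_of_mem _ hv⟩

lemma Gam_card (h : Fin t → Fin n → Fin b) (S : Finset (Fin n)) :
    (Gam h S).card = ∑ j : Fin t, (S.image (h j)).card := by
  classical
  rw [Gam, Finset.card_biUnion]
  · refine Finset.sum_congr rfl (fun j _ => ?_)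
    rw [Finset.card_image_of_injective]
    intro a b hab; cases hab; rfl
  · intro j1 _ j2 _ hne
    simp only [Finset.disjoint_left]
    intro p hp1 hp2
    rcases Finset.mem_image.1 hp1 with ⟨v1, _, h1⟩
    rcases Finset.mem_image.1 hp2 with ⟨v2, _, h2⟩
    exact hne (congrArg Prod.fst (h1.trans h2.symm))

lemma Gam_card_le (h : Fin t → Fin n → Fin b) (S : Finset (Fin n)) :
    (Gam h S).card ≤ t * S.card := by
  rw [Gam_card]
  calc ∑ j : Fin t, (S.image (h j)).card ≤ ∑ _j : Fin t, S.card :=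
        Finset.sum_le_sum (fun j _ => Finset.card_image_le)
    _ = t * S.card := by simp [Finset.sum_const, Finset.card_univ]

lemma Gam_singleton_card (h : Fin t → Fin n → Fin b) (i : Fin n) :
    (Gam h {i}).card = t := by
  rw [Gam_card]; simp

lemma Gam_mono (h : Fin t → Fin n → Fin b) {S S' : Finset (Fin n)} (hss : S ⊆ S') :
    Gam h S ⊆ Gam h S' := by
  intro p hp
  rcases p with ⟨j, v⟩
  rw [mem_Gam] at hp ⊢
  exact Finset.image_subset_image hss hp

/-- Union bound: `Γ(T ∪ I) ≤ Γ(T) + Σ_{i ∈ I} |Γ({i}) \ Γ(T)|`. -/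
lemma Gam_union_card_le (h : Fin t → Fin n → Fin b) (T I : Finset (Fin n)) :
    (Gam h (T ∪ I)).card ≤ (Gam h T).card + ∑ i ∈ I, ((Gam h {i}) \ (Gam h T)).card := by
  classical
  have hsub : Gam h (T ∪ I) ⊆ (Gam h T) ∪ I.biUnion (fun i => (Gam h {i}) \ (Gam h T)) := by
    intro p hp
    rcases p with ⟨j, v⟩
    rw [mem_Gam] at hp
    rcases Finset.mem_image.1 hp with ⟨i, hiTI, hiv⟩
    rcases Finset.mem_union.1 hiTI with hiT | hiI
    · exact Finset.mem_union_left _ ((mem_Gam).2 (Finset.mem_image.2 ⟨i, hiT, hiv⟩))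
    · by_cases hmem : (j, v) ∈ Gam h T
      · exact Finset.mem_union_left _ hmem
      · refine Finset.mem_union_right _ (Finset.mem_biUnion.2 ⟨i, hiI, ?_⟩)
        refine Finset.mem_sdiff.2 ⟨?_, hmem⟩
        exact (mem_Gam).2 (Finset.mem_image.2 ⟨i, Finset.mem_singleton_self i, hiv⟩)
  calc (Gam h (T ∪ I)).card ≤ ((Gam h T) ∪ I.biUnion (fun i => (Gam h {i}) \ (Gam h T))).card :=
        Finset.card_le_card hsub
    _ ≤ (Gam h T).card + (I.biUnion (fun i => (Gam h {i}) \ (Gam h T))).card :=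
        Finset.card_union_le _ _
    _ ≤ (Gam h T).card + ∑ i ∈ I, ((Gam h {i}) \ (Gam h T)).card := by
        exact Nat.add_le_add_left (Finset.card_biUnion_le) _

/-- The repeat darts of an enumeration `e : Fin u ↪ Fin n`. -/
def RepD (h : Fin t → Fin n → Fin b) {u : ℕ} (e : Fin u ↪ Fin n) : Finset (Fin u × Fin t) :=
  Finset.univ.biUnion (fun j : Fin t =>
    (Finset.univ.filter (fun k : Fin u => ∃ k' : Fin u, k'.val < k.val ∧ h j (e k') = h j (e k))).image
      (fun k => (k, j)))

lemma RepD_card (h : Fin t → Fin n → Fin b) {u : ℕ} (e : Fin u ↪ Fin n) :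
    (RepD h e).card = ∑ j : Fin t,
      (Finset.univ.filter (fun k : Fin u => ∃ k' : Fin u, k'.val < k.val ∧ h j (e k') = h j (e k))).card := by
  classical
  rw [RepD, Finset.card_biUnion]
  · refine Finset.sum_congr rfl (fun j _ => ?_)
    rw [Finset.card_image_of_injective]
    intro a b hab; cases hab; rfl
  · intro j1 _ j2 _ hne
    simp only [Finset.disjoint_left]
    intro p hp1 hp2
    rcases Finset.mem_image.1 hp1 with ⟨v1, _, h1⟩
    rcases Finset.mem_image.1 hp2 with ⟨v2, _, h2⟩
    exact hne (congrArg Prod.snd (h1.trans h2.symm))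

lemma mem_RepD {h : Fin t → Fin n → Fin b} {u : ℕ} {e : Fin u ↪ Fin n} {d : Fin u × Fin t} :
    d ∈ RepD h e ↔ ∃ k' : Fin u, k'.val < d.1.val ∧ h d.2 (e k') = h d.2 (e d.1) := by
  constructor
  · intro hm
    rcases Finset.mem_biUnion.1 hm with ⟨j, _, hj⟩
    rcases Finset.mem_image.1 hj with ⟨k, hk, he⟩
    cases he
    exact (Finset.mem_filter.1 hk).2
  · intro hex
    refine Finset.mem_biUnion.2 ⟨d.2, Finset.mem_univ _, ?_⟩
    refine Finset.mem_image.2 ⟨d.1, Finset.mem_filter.2 ⟨Finset.mem_univ _, hex⟩, rfl⟩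

-- per-block lemma from before
lemma block_bound {u : ℕ} {β : Type*} [DecidableEq β] (g : Fin u → β) :
    u ≤ (Finset.univ.image g).card +
      (Finset.univ.filter (fun k : Fin u => ∃ k' : Fin u, k'.val < k.val ∧ g k' = g k)).card := by
  classical
  have h1 : (Finset.univ.filter (fun k : Fin u => ¬ ∃ k' : Fin u, k'.val < k.val ∧ g k' = g k)).card
      ≤ (Finset.univ.image g).card := by
    apply Finset.card_le_card_of_injOn g
    · intro a _; exact Finset.mem_image_of_mem g (Finset.mem_univ a)
    · intro a ha b hb hab
      simp only [Finset.coe_filter, Set.mem_setOf_eq] at ha hb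
      by_contra hne
      rcases Nat.lt_or_ge a.val b.val with hlt | hge
      · exact hb.2 ⟨a, hlt, hab⟩
      · have : b.val < a.val := lt_of_le_of_ne hge (fun h => hne (Fin.ext h.symm))
        exact ha.2 ⟨b, this, hab.symm⟩
  have h2 := Finset.card_filter_add_card_filter_not
    (s := (Finset.univ : Finset (Fin u)))
    (p := fun k : Fin u => ∃ k' : Fin u, k'.val < k.val ∧ g k' = g k)
  simp only [Finset.card_univ, Fintype.card_fin] at h2
  omega

/-- Total: t·u ≤ |Γ(S)| + |Rep(e)| when S is enumerated by e. -/
lemma total_bound (h : Fin t → Fin n → Fin b) {u : ℕ} (e : Fin u ↪ Fin n)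
    {S : Finset (Fin n)} (hS : S = Finset.univ.image (e : Fin u → Fin n)) :
    t * u ≤ (Gam h S).card + (RepD h e).card := by
  classical
  rw [Gam_card, RepD_card]
  have key : ∀ j : Fin t, u ≤ (S.image (h j)).card +
      (Finset.univ.filter (fun k : Fin u => ∃ k' : Fin u, k'.val < k.val ∧ h j (e k') = h j (e k))).card := by
    intro j
    have himg : S.image (h j) = Finset.univ.image (fun k => h j (e k)) := by
      rw [hS, Finset.image_image]; rfl
    rw [himg]
    exact block_bound (fun k => h j (e k))
  calc t * u = ∑ _j : Fin t, u := by simp [Finset.sum_const, Finset.card_univ, Nat.mul_comm]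
    _ ≤ ∑ j : Fin t, ((S.image (h j)).card +
        (Finset.univ.filter (fun k : Fin u => ∃ k' : Fin u, k'.val < k.val ∧ h j (e k') = h j (e k))).card) :=
        Finset.sum_le_sum (fun j _ => key j)
    _ = _ := Finset.sum_add_distrib

end setup


section counting
variable {n t b u : ℕ}

/-- Compatibility of `h` with a witness shape. -/
def Compat (A : Finset (Fin u × Fin t)) (ptr : ↥A → Fin u) (e : Fin u ↪ Fin n)
    (h : Fin t → Fin n → Fin b) : Prop :=
  ∀ a : ↥A, (ptr a).val < a.val.1.val ∧ h a.val.2 (e (ptr a)) = h a.val.2 (e a.val.1)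

instance (A : Finset (Fin u × Fin t)) (ptr : ↥A → Fin u) (e : Fin u ↪ Fin n)
    (h : Fin t → Fin n → Fin b) : Decidable (Compat A ptr e h) := by
  unfold Compat; infer_instance

/-- The pinned coordinates of a shape. -/
def pins (A : Finset (Fin u × Fin t)) (e : Fin u ↪ Fin n) : Finset (Fin t × Fin n) :=
  A.image (fun d => (d.2, e d.1))

lemma pins_card (A : Finset (Fin u × Fin t)) (e : Fin u ↪ Fin n) :
    (pins A e).card = A.card := by
  rw [pins, Finset.card_image_of_injOn]
  intro d1 _ d2 _ hd
  have h1 : d1.2 = d2.2 := congrArg Prod.fst hd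
  have h2 : e d1.1 = e d2.1 := congrArg Prod.snd hd
  have h3 : d1.1 = d2.1 := e.injective h2
  exact Prod.ext h3 h1

/-- Per-shape counting: compatible functions are at most `b ^ (t*n - |A|)`. -/
lemma compat_card (A : Finset (Fin u × Fin t)) (ptr : ↥A → Fin u) (e : Fin u ↪ Fin n) :
    ((Finset.univ : Finset (Fin t → Fin n → Fin b)).filter (Compat A ptr e)).card
      ≤ b ^ (t * n - A.card) := by
  classical
  have hcard : Fintype.card (↥((pins A e)ᶜ) → Fin b) = b ^ (t * n - A.card) := by
    rw [Fintype.card_fun, Fintype.card_fin, Fintype.card_coe, Finset.card_compl]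
    congr 1
    rw [pins_card, Fintype.card_prod, Fintype.card_fin, Fintype.card_fin]
  calc ((Finset.univ : Finset (Fin t → Fin n → Fin b)).filter (Compat A ptr e)).card
      ≤ (Finset.univ : Finset (↥((pins A e)ᶜ) → Fin b)).card := ?_
    _ = b ^ (t * n - A.card) := by rw [Finset.card_univ, hcard]
  apply Finset.card_le_card_of_injOn
    (fun h => (fun q : ↥((pins A e)ᶜ) => h q.val.1 q.val.2))
  · intro _ _; exact Finset.mem_univ _
  · intro h1 hm1 h2 hm2 heq
    simp only [Finset.coe_filter, Set.mem_setOf_eq] at hm1 hm2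
    have hc1 := hm1.2; have hc2 := hm2.2
    -- key: equality on all (k, j) darts by strong induction on k
    have key : ∀ m : ℕ, ∀ k : Fin u, k.val ≤ m → ∀ j : Fin t, h1 j (e k) = h2 j (e k) := by
      intro m
      induction m with
      | zero =>
        intro k hk j
        by_cases hmem : (k, j) ∈ A
        · have hlt : (ptr ⟨(k,j), hmem⟩).val < k.val := (hc1 ⟨(k,j), hmem⟩).1
          exact absurd hlt (by omega)
        · -- unpinned
          have hup : (j, e k) ∈ (pins A e)ᶜ := by
            rw [Finset.mem_compl]
            intro hpin
            rcases Finset.mem_image.1 hpin with ⟨d, hd, hde⟩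
            have hj : d.2 = j := congrArg Prod.fst hde
            have hek : e d.1 = e k := congrArg Prod.snd hde
            have : d.1 = k := e.injective hek
            exact hmem (by rw [← this, ← hj]; exact hd)
          exact congrFun heq ⟨(j, e k), hup⟩
      | succ m ih =>
        intro k hk j
        by_cases hmem : (k, j) ∈ A
        · have hlt : (ptr ⟨(k,j), hmem⟩).val < k.val := (hc1 ⟨(k,j), hmem⟩).1
          have heq1 : h1 j (e (ptr ⟨(k,j), hmem⟩)) = h1 j (e k) := (hc1 ⟨(k,j), hmem⟩).2
          have heq2 : h2 j (e (ptr ⟨(k,j), hmem⟩)) = h2 j (e k) := (hc2 ⟨(k,j), hmem⟩).2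
          have hple : (ptr ⟨(k,j), hmem⟩).val ≤ m := by omega
          have := ih (ptr ⟨(k,j), hmem⟩) hple j
          rw [← heq1, ← heq2, this]
        · have hup : (j, e k) ∈ (pins A e)ᶜ := by
            rw [Finset.mem_compl]
            intro hpin
            rcases Finset.mem_image.1 hpin with ⟨d, hd, hde⟩
            have hj : d.2 = j := congrArg Prod.fst hde
            have hek : e d.1 = e k := congrArg Prod.snd hde
            have : d.1 = k := e.injective hek
            exact hmem (by rw [← this, ← hj]; exact hd)
          exact congrFun heq ⟨(j, e k), hup⟩
    funext j i
    by_cases hri : ∃ k : Fin u, e k = i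
    · rcases hri with ⟨k, rfl⟩
      exact key k.val k (le_refl _) j
    · have hup : (j, i) ∈ (pins A e)ᶜ := by
        rw [Finset.mem_compl]
        intro hpin
        rcases Finset.mem_image.1 hpin with ⟨d, _, hde⟩
        exact hri ⟨d.1, congrArg Prod.snd hde⟩
      exact congrFun heq ⟨(j, i), hup⟩

end counting

section shapes
variable (n t b u R : ℕ)

/-- Witness shapes. -/
abbrev Shape : Type :=
  Σ A : {A : Finset (Fin u × Fin t) // A.card = R}, ((↥A.val → Fin u) × (Fin u ↪ Fin n))

lemma shape_card :
    Fintype.card (Shape n t u R) = ((u*t).choose R) * (u ^ R * (n.descFactorial u)) := by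
  classical
  rw [Fintype.card_sigma]
  have hfib : ∀ A : {A : Finset (Fin u × Fin t) // A.card = R},
      Fintype.card ((↥A.val → Fin u) × (Fin u ↪ Fin n)) = u ^ R * (n.descFactorial u) := by
    intro A
    rw [Fintype.card_prod, Fintype.card_fun, Fintype.card_coe, A.2,
      Fintype.card_embedding_eq, Fintype.card_fin, Fintype.card_fin]
  rw [Finset.sum_congr rfl (fun A _ => hfib A), Finset.sum_const, Finset.card_univ]
  rw [Fintype.card_subtype]
  have : (Finset.univ.filter (fun A : Finset (Fin u × Fin t) => A.card = R))
      = Finset.powersetCard R (Finset.univ : Finset (Fin u × Fin t)) := by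
    ext A
    simp [Finset.mem_powersetCard]
  rw [this, Finset.card_powersetCard, Finset.card_univ, Fintype.card_prod,
    Fintype.card_fin, Fintype.card_fin]
  ring
end shapes

section badu
variable {n t b : ℕ}

lemma BADu_bound (u R : ℕ) (hR : 0 < R) :
    ((Finset.univ : Finset (Fin t → Fin n → Fin b)).filter
        (fun h => ∃ S : Finset (Fin n), S.card = u ∧ (Gam h S).card + R ≤ t*u)).card
      ≤ ((u*t).choose R) * (u ^ R * (n.descFactorial u)) * b ^ (t*n - R) := by
  classical
  have hsub : ((Finset.univ : Finset (Fin t → Fin n → Fin b)).filter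
        (fun h => ∃ S : Finset (Fin n), S.card = u ∧ (Gam h S).card + R ≤ t*u))
      ⊆ (Finset.univ : Finset (Shape n t u R)).biUnion
          (fun sh => (Finset.univ : Finset (Fin t → Fin n → Fin b)).filter
            (Compat sh.1.val sh.2.1 sh.2.2)) := by
    intro h hm
    rcases Finset.mem_filter.1 hm with ⟨-, S, hSu, hbad⟩
    set e : Fin u ↪ Fin n := (S.orderEmbOfFin hSu).toEmbedding with he
    have himg : S = Finset.univ.image (e : Fin u → Fin n) := by
      apply Finset.coe_injective
      rw [Finset.coe_image, Finset.coe_univ, Set.image_univ]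
      exact (Finset.range_orderEmbOfFin S hSu).symm
    have htot := total_bound h e himg
    have hRle : R ≤ (RepD h e).card := by omega
    obtain ⟨A, hAsub, hAcard⟩ := Finset.exists_subset_card_eq hRle
    have hptr : ∀ a : ↥A, ∃ k' : Fin u, k'.val < a.val.1.val ∧
        h a.val.2 (e k') = h a.val.2 (e a.val.1) :=
      fun a => mem_RepD.1 (hAsub a.2)
    set ptr : ↥A → Fin u := fun a => Classical.choose (hptr a) with hptrdef
    refine Finset.mem_biUnion.2 ⟨⟨⟨A, hAcard⟩, ptr, e⟩, Finset.mem_univ _, ?_⟩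
    refine Finset.mem_filter.2 ⟨Finset.mem_univ _, ?_⟩
    intro a
    exact Classical.choose_spec (hptr a)
  calc _ ≤ ((Finset.univ : Finset (Shape n t u R)).biUnion
          (fun sh => (Finset.univ : Finset (Fin t → Fin n → Fin b)).filter
            (Compat sh.1.val sh.2.1 sh.2.2))).card := Finset.card_le_card hsub
    _ ≤ ∑ sh : Shape n t u R,
          ((Finset.univ : Finset (Fin t → Fin n → Fin b)).filter
            (Compat sh.1.val sh.2.1 sh.2.2)).card := Finset.card_biUnion_le
    _ ≤ ∑ _sh : Shape n t u R, b ^ (t*n - R) := by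
        refine Finset.sum_le_sum (fun sh _ => ?_)
        have := compat_card (b := b) sh.1.val sh.2.1 sh.2.2
        rw [sh.1.2] at this; exact this
    _ = Fintype.card (Shape n t u R) * b ^ (t*n - R) := by
        rw [Finset.sum_const, Finset.card_univ, smul_eq_mul]
    _ = _ := by rw [shape_card]
end badu


-- numeric helpers
lemma choose_le_two_pow (m k : ℕ) : m.choose k ≤ 2 ^ m := by
  rcases Nat.lt_or_ge m k with h | h
  · rw [Nat.choose_eq_zero_of_lt h]; positivity
  · calc m.choose k ≤ ∑ i ∈ Finset.range (m+1), m.choose i :=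
        Finset.single_le_sum (f := fun i => m.choose i) (fun i _ => Nat.zero_le _)
          (Finset.mem_range.2 (Nat.lt_succ_of_le h))
    _ = 2 ^ m := Nat.sum_range_choose m

lemma term_bound (n s L u : ℕ) (hs : 0 < s) (hsn : s ≤ n) (hL : n ≤ 2^L)
    (hu : 1 ≤ u) (hu2 : u ≤ 2*s) :
    ((u*(64*(L+2))).choose ((L+2)*u)) * (u ^ ((L+2)*u) * n.descFactorial u)
      * (2^70*s) ^ ((64*(L+2))*n - (L+2)*u) * 2^(4*L+10)
    ≤ (2^70*s)^((64*(L+2))*n) := by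
  set t := 64*(L+2) with ht
  set b := 2^70*s with hb
  set R := (L+2)*u with hR
  have hRtn : R ≤ t*n := by
    have h1 : u ≤ 2*n := le_trans hu2 (by omega)
    calc R = (L+2)*u := rfl
      _ ≤ (L+2)*(2*n) := Nat.mul_le_mul_left _ h1
      _ ≤ (64*(L+2))*n := by ring_nf; omega
  -- bound the three factors
  have f1 : (u*t).choose R ≤ 2 ^ (u*t) := choose_le_two_pow _ _
  have f2 : u ^ R ≤ (2*s) ^ R := Nat.pow_le_pow_left hu2 _
  have f3 : n.descFactorial u ≤ 2 ^ (L*u) := by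
    calc n.descFactorial u ≤ n ^ u := Nat.descFactorial_le_pow _ _
      _ ≤ (2^L) ^ u := Nat.pow_le_pow_left hL _
      _ = 2 ^ (L*u) := by rw [← pow_mul]
  have hexp : u*t + (L*u + (4*L+10)) ≤ 69 * R := by
    have h10 : 4*L+10 ≤ (4*L+10)*u := Nat.le_mul_of_pos_right _ hu
    have : 69 * R = 64*(L+2)*u + 5*(L+2)*u := by ring
    rw [this, ht]
    have h5 : L*u + (4*L+10) ≤ 5*(L+2)*u := by
      calc L*u + (4*L+10) ≤ L*u + (4*L+10)*u := by omega
        _ ≤ 5*(L+2)*u := by nlinarith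
    have : u*(64*(L+2)) = 64*(L+2)*u := by ring
    omega
  calc ((u*t).choose R) * (u ^ R * n.descFactorial u) * b ^ (t*n - R) * 2^(4*L+10)
      ≤ (2^(u*t)) * ((2*s) ^ R * 2^(L*u)) * b ^ (t*n - R) * 2^(4*L+10) := by
        apply Nat.mul_le_mul_right
        apply Nat.mul_le_mul_right
        exact Nat.mul_le_mul f1 (Nat.mul_le_mul f2 f3)
    _ = (2^(u*t + (L*u + (4*L+10)))) * (2*s) ^ R * b ^ (t*n - R) := by ring
    _ ≤ (2^(69*R)) * (2*s) ^ R * b ^ (t*n - R) := by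
        apply Nat.mul_le_mul_right
        apply Nat.mul_le_mul_right
        exact Nat.pow_le_pow_right (by norm_num) hexp
    _ = ((2^69) * (2*s)) ^ R * b ^ (t*n - R) := by
        congr 1
        rw [mul_pow, mul_pow, ← pow_mul]
        rw [mul_pow]
    _ = b ^ R * b ^ (t*n - R) := by
        congr 2
        rw [hb]; ring
    _ = b ^ (t*n) := by rw [← pow_add]; congr 1; omega

/-- Existence of a good hash system. -/
lemma exists_good (n s : ℕ) (hn : 2 ≤ n) (hs : 0 < s) (hsn : s ≤ n) :
    ∃ h : Fin (64*(Nat.clog 2 n + 2)) → Fin n → Fin (2^70 * s),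
      ∀ S : Finset (Fin n), S.Nonempty → S.card ≤ 2*s →
        ¬ ((Gam h S).card + (Nat.clog 2 n + 2)*S.card ≤ (64*(Nat.clog 2 n + 2))*S.card) := by
  set L := Nat.clog 2 n with hLdef
  set t := 64*(L+2) with ht
  set b := 2^70*s with hb
  have hL : n ≤ 2^L := Nat.le_pow_clog (by norm_num) n
  by_contra hcon
  push_neg at hcon
  set BAD := (Finset.Icc 1 (2*s)).biUnion (fun u =>
      (Finset.univ : Finset (Fin t → Fin n → Fin b)).filter
        (fun h => ∃ S : Finset (Fin n), S.card = u ∧ (Gam h S).card + (L+2)*u ≤ t*u)) with hBAD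
  have huniv : (Finset.univ : Finset (Fin t → Fin n → Fin b)) ⊆ BAD := by
    intro h _
    obtain ⟨S, hne, hcard, hbad⟩ := hcon h
    refine Finset.mem_biUnion.2 ⟨S.card, Finset.mem_Icc.2 ⟨Finset.card_pos.2 hne, hcard⟩,
      Finset.mem_filter.2 ⟨Finset.mem_univ _, S, rfl, hbad⟩⟩
  have hcards : b ^ (t*n) ≤ BAD.card := by
    have h0 := Finset.card_le_card huniv
    rw [Finset.card_univ] at h0
    have hcu : Fintype.card (Fin t → Fin n → Fin b) = b ^ (t*n) := by
      simp only [Fintype.card_fun, Fintype.card_fin]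
      rw [← pow_mul, Nat.mul_comm n t]
    rwa [hcu] at h0
  have hbound : BAD.card * 2^(4*L+10) ≤ (2*s) * b^(t*n) := by
    calc BAD.card * 2^(4*L+10)
        ≤ (∑ u ∈ Finset.Icc 1 (2*s),
            ((Finset.univ : Finset (Fin t → Fin n → Fin b)).filter
              (fun h => ∃ S : Finset (Fin n), S.card = u ∧ (Gam h S).card + (L+2)*u ≤ t*u)).card)
            * 2^(4*L+10) := Nat.mul_le_mul_right _ Finset.card_biUnion_le
      _ = ∑ u ∈ Finset.Icc 1 (2*s),
            ((Finset.univ : Finset (Fin t → Fin n → Fin b)).filter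
              (fun h => ∃ S : Finset (Fin n), S.card = u ∧ (Gam h S).card + (L+2)*u ≤ t*u)).card
            * 2^(4*L+10) := Finset.sum_mul ..
      _ ≤ ∑ _u ∈ Finset.Icc 1 (2*s), b^(t*n) := by
          apply Finset.sum_le_sum
          intro u hu
          rcases Finset.mem_Icc.1 hu with ⟨hu1, hu2⟩
          have h1 : ((Finset.univ : Finset (Fin t → Fin n → Fin b)).filter
              (fun h => ∃ S : Finset (Fin n), S.card = u ∧ (Gam h S).card + (L+2)*u ≤ t*u)).card
              ≤ ((u*t).choose ((L+2)*u)) * (u ^ ((L+2)*u) * (n.descFactorial u)) * b ^ (t*n - (L+2)*u) :=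
            BADu_bound u ((L+2)*u) (by positivity)
          have h2 := term_bound n s L u hs hsn hL hu1 hu2
          calc _ ≤ (((u*t).choose ((L+2)*u)) * (u ^ ((L+2)*u) * (n.descFactorial u))
                * b ^ (t*n - (L+2)*u)) * 2^(4*L+10) := Nat.mul_le_mul_right _ h1
            _ ≤ b^(t*n) := h2
      _ = (2*s) * b^(t*n) := by rw [Finset.sum_const, Nat.card_Icc]; simp [smul_eq_mul]
  have h2s : 2*s ≤ 2^(L+1) := by
    calc 2*s ≤ 2*n := by omega
      _ ≤ 2*2^L := by omega
      _ = 2^(L+1) := by ring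
  have hfin : b^(t*n) * 2^(4*L+10) ≤ 2^(L+1) * b^(t*n) :=
    le_trans (Nat.mul_le_mul_right _ hcards) (le_trans hbound (Nat.mul_le_mul_right _ h2s))
  have hbpos : 0 < b^(t*n) := by positivity
  have hfin2 : b^(t*n) * 2^(4*L+10) ≤ b^(t*n) * 2^(L+1) := by
    rwa [Nat.mul_comm (2^(L+1)) (b^(t*n))] at hfin
  have hle2 : 2^(4*L+10) ≤ 2^(L+1) := Nat.le_of_mul_le_mul_left hfin2 hbpos
  have : (4*L+10) ≤ (L+1) := (Nat.pow_le_pow_iff_right (by norm_num)).1 hle2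
  omega

section encoding
variable {n s t b Lp : ℕ}

/-- Main encoding lemma. -/
lemma encode (h : Fin t → Fin n → Fin b) (hs : 0 < s) (hLp : 1 ≤ Lp) (ht : t = 64*Lp)
    (hgood : ∀ S : Finset (Fin n), S.Nonempty → S.card ≤ 2*s →
      t*S.card < (Gam h S).card + Lp*S.card)
    (x : Fin n → Bool) (hwt : (Finset.univ.filter (fun i => x i = true)).card ≤ s) :
    ∃ U : Finset (Fin t × Fin b),
      (∀ i, x i = true → t ≤ (Finset.univ.filter (fun j : Fin t => (j, h j i) ∈ U)).card + Lp) ∧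
      (∀ i, x i = false → (Finset.univ.filter (fun j : Fin t => (j, h j i) ∈ U)).card ≤ 8*Lp) := by
  classical
  set T := Finset.univ.filter (fun i => x i = true) with hT
  set d : Fin n → ℕ := fun i => ((Gam h {i}) ∩ (Gam h T)).card with hd
  set NE := Finset.univ.filter (fun i => i ∉ T ∧ 8*Lp < d i) with hNE
  have h8t : 8*Lp+1 ≤ t := by omega
  -- |NE| ≤ s
  have hNEcard : NE.card ≤ s := by
    by_contra hlt
    push_neg at hlt
    obtain ⟨I, hIsub, hIcard⟩ := Finset.exists_subset_card_eq (le_of_lt hlt : s ≤ NE.card)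
    have hdisj : Disjoint T I := by
      rw [Finset.disjoint_left]
      intro a haT haI
      exact ((Finset.mem_filter.1 (hIsub haI)).2).1 haT
    have hunion_card : (T ∪ I).card = T.card + s := by
      rw [Finset.card_union_of_disjoint hdisj, hIcard]
    have hle2s : (T ∪ I).card ≤ 2*s := by omega
    have hne : (T ∪ I).Nonempty := by
      have : I.Nonempty := Finset.card_pos.1 (by omega)
      exact Finset.Nonempty.mono Finset.subset_union_right this
    have hE := hgood (T ∪ I) hne hle2s
    rw [hunion_card] at hE
    -- upper bound on Γ(T ∪ I)
    have hup : (Gam h (T ∪ I)).card ≤ t*T.card + (∑ i ∈ I, (t - d i)) := by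
      calc (Gam h (T ∪ I)).card
          ≤ (Gam h T).card + ∑ i ∈ I, ((Gam h {i}) \ (Gam h T)).card := Gam_union_card_le h T I
        _ ≤ t*T.card + ∑ i ∈ I, (t - d i) := by
            apply Nat.add_le_add (Gam_card_le h T)
            apply Finset.sum_le_sum
            intro i _
            have h1 := Finset.card_sdiff_add_card_inter (Gam h {i}) (Gam h T)
            rw [Gam_singleton_card h i] at h1
            have hdi : d i = ((Gam h {i}) ∩ (Gam h T)).card := rfl
            omega
    have hsum : ∑ i ∈ I, (t - d i) ≤ s * (t - (8*Lp+1)) := by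
      calc ∑ i ∈ I, (t - d i) ≤ ∑ _i ∈ I, (t - (8*Lp+1)) := by
            apply Finset.sum_le_sum
            intro i hi
            have h2 : 8*Lp + 1 ≤ d i := ((Finset.mem_filter.1 (hIsub hi)).2).2
            have hdi : d i = ((Gam h {i}) ∩ (Gam h T)).card := rfl
            omega
        _ = s * (t - (8*Lp+1)) := by rw [Finset.sum_const, hIcard, smul_eq_mul]
    have hW : s*(t - (8*Lp+1)) + (8*(Lp*s) + s) = 64*(Lp*s) := by
      have : s*(t - (8*Lp+1)) + s*(8*Lp+1) = s*t := by
        rw [← Nat.mul_add]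
        congr 1
        omega
      have e3 : s*t = 64*(Lp*s) := by rw [ht]; ring
      have e6 : s*(8*Lp+1) = 8*(Lp*s) + s := by ring
      omega
    have hE' : 64*(Lp*T.card) + 64*(Lp*s) < (Gam h (T ∪ I)).card + (Lp*T.card + Lp*s) := by
      have e1 : t*(T.card + s) = 64*(Lp*T.card) + 64*(Lp*s) := by rw [ht]; ring
      have e4 : Lp*(T.card+s) = Lp*T.card + Lp*s := by ring
      rw [e1, e4] at hE
      exact hE
    have hup' : (Gam h (T ∪ I)).card ≤ 64*(Lp*T.card) + (∑ i ∈ I, (t - d i)) := by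
      have e2 : t*T.card = 64*(Lp*T.card) := by rw [ht]; ring
      rw [e2] at hup
      exact hup
    have e5 : Lp*T.card ≤ Lp*s := Nat.mul_le_mul_left _ hwt
    omega
  -- S* := T ∪ NE
  have hScard : (T ∪ NE).card ≤ 2*s := by
    calc (T ∪ NE).card ≤ T.card + NE.card := Finset.card_union_le _ _
      _ ≤ 2*s := by omega
  -- Hall's condition
  have hHall : ∀ W : Finset (↥(T ∪ NE) × Fin (t - Lp)),
      W.card ≤ (W.biUnion (fun p => Gam h {p.1.val})).card := by
    intro W
    rcases W.eq_empty_or_nonempty with rfl | hWne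
    · simp
    set S' := W.image (fun p => p.1.val) with hS'
    have hS'sub : S' ⊆ T ∪ NE := by
      intro i hi
      rcases Finset.mem_image.1 hi with ⟨p, _, rfl⟩
      exact p.1.2
    have hS'ne : S'.Nonempty := hWne.image _
    have hS'card : S'.card ≤ 2*s := le_trans (Finset.card_le_card hS'sub) hScard
    have hWle : W.card ≤ S'.card * (t - Lp) := by
      have hsub : W ⊆ (W.image Prod.fst) ×ˢ (Finset.univ : Finset (Fin (t - Lp))) := by
        intro p hp
        exact Finset.mem_product.2 ⟨Finset.mem_image_of_mem _ hp, Finset.mem_univ _⟩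
      have h1 : W.card ≤ (W.image Prod.fst).card * (t - Lp) := by
        have := Finset.card_le_card hsub
        rwa [Finset.card_product, Finset.card_univ, Fintype.card_fin] at this
      have h2 : S'.card = (W.image Prod.fst).card := by
        rw [hS']
        have : W.image (fun p => p.1.val) = (W.image Prod.fst).image Subtype.val := by
          rw [Finset.image_image]; rfl
        rw [this, Finset.card_image_of_injective _ Subtype.val_injective]
      rw [h2]
      exact h1
    have hbiU : W.biUnion (fun p => Gam h {p.1.val}) = Gam h S' := by
      ext cell
      constructor
      · intro hc
        rcases Finset.mem_biUnion.1 hc with ⟨p, hp, hcp⟩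
        apply Gam_mono h _ hcp
        intro z hz
        rw [Finset.mem_singleton] at hz
        rw [hz]
        exact Finset.mem_image_of_mem _ hp
      · intro hc
        rcases cell with ⟨j, v⟩
        rw [mem_Gam] at hc
        rcases Finset.mem_image.1 hc with ⟨i, hiS', hvi⟩
        rcases Finset.mem_image.1 hiS' with ⟨p, hpW, rfl⟩
        refine Finset.mem_biUnion.2 ⟨p, hpW, ?_⟩
        rw [mem_Gam]
        exact Finset.mem_image.2 ⟨p.1.val, Finset.mem_singleton_self _, hvi⟩
    rw [hbiU]
    have hE := hgood S' hS'ne hS'card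
    have hsubmul : (t - Lp) * S'.card ≤ (Gam h S').card := by
      have h1 : (t-Lp)*S'.card + Lp*S'.card = t*S'.card := by
        rw [← Nat.add_mul]
        congr 1
        omega
      omega
    calc W.card ≤ S'.card * (t - Lp) := hWle
      _ = (t - Lp) * S'.card := Nat.mul_comm _ _
      _ ≤ (Gam h S').card := hsubmul
  obtain ⟨f, hfinj, hfmem⟩ :=
    (Finset.all_card_le_biUnion_card_iff_exists_injective
      (fun p : ↥(T ∪ NE) × Fin (t - Lp) => Gam h {p.1.val})).1 hHall
  set P : ↥(T ∪ NE) → Finset (Fin t × Fin b) :=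
    fun w => Finset.univ.image (fun k : Fin (t - Lp) => f (w, k)) with hP
  have hPcard : ∀ w, (P w).card = t - Lp := by
    intro w
    rw [hP, Finset.card_image_of_injective, Finset.card_univ, Fintype.card_fin]
    intro k1 k2 hk
    have := hfinj hk
    exact congrArg Prod.snd this
  have hPsub : ∀ w, P w ⊆ Gam h {w.val} := by
    intro w cell hcell
    rcases Finset.mem_image.1 hcell with ⟨k, _, rfl⟩
    exact hfmem (w, k)
  have hPdisj : ∀ w w', w ≠ w' → ∀ cell, cell ∈ P w → cell ∉ P w' := by
    intro w w' hne cell hcw hcw'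
    rcases Finset.mem_image.1 hcw with ⟨k, _, hk⟩
    rcases Finset.mem_image.1 hcw' with ⟨k', _, hk'⟩
    have : (w, k) = (w', k') := hfinj (hk.trans hk'.symm)
    exact hne (congrArg Prod.fst this)
  set U := (Finset.univ : Finset ↥(T ∪ NE)).biUnion
      (fun w => if w.val ∈ T then P w else ∅) with hU
  have hUsubT : U ⊆ Gam h T := by
    intro cell hcell
    rcases Finset.mem_biUnion.1 hcell with ⟨w, _, hcw⟩
    by_cases hwT : w.val ∈ T
    · rw [if_pos hwT] at hcw
      apply Gam_mono h _ (hPsub w hcw)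
      intro z hz
      rw [Finset.mem_singleton] at hz
      rw [hz]; exact hwT
    · rw [if_neg hwT] at hcw
      exact absurd hcw (Finset.notMem_empty _)
  have hGamSingle : ∀ (i : Fin n) (j : Fin t) (v : Fin b), (j, v) ∈ Gam h {i} ↔ v = h j i := by
    intro i j v
    rw [mem_Gam]
    simp
  refine ⟨U, ?_, ?_⟩
  · -- ones
    intro i hxi
    have hiT : i ∈ T := Finset.mem_filter.2 ⟨Finset.mem_univ _, hxi⟩
    have hiS : i ∈ T ∪ NE := Finset.mem_union_left _ hiT
    set wi : ↥(T ∪ NE) := ⟨i, hiS⟩ with hwi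
    have hPU : P wi ⊆ U := by
      intro cell hcell
      exact Finset.mem_biUnion.2 ⟨wi, Finset.mem_univ _, by rw [if_pos hiT]; exact hcell⟩
    have hinj : (P wi).card ≤
        (Finset.univ.filter (fun j : Fin t => (j, h j i) ∈ U)).card := by
      apply Finset.card_le_card_of_injOn (fun cell => cell.1)
      · intro cell hcell
        have hG : cell ∈ Gam h {i} := hPsub wi hcell
        rcases cell with ⟨j, v⟩
        have hv : v = h j i := (hGamSingle i j v).1 hG
        refine Finset.mem_filter.2 ⟨Finset.mem_univ _, ?_⟩
        rw [← hv]
        exact hPU hcell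
      · intro c1 hc1 c2 hc2 hc
        have h1 : c1.2 = h c1.1 i := by
          have := (hGamSingle i c1.1 c1.2).1 (hPsub wi (by simpa using hc1))
          exact this
        have h2 : c2.2 = h c2.1 i := by
          have := (hGamSingle i c2.1 c2.2).1 (hPsub wi (by simpa using hc2))
          exact this
        have hc' : c1.1 = c2.1 := hc
        have : c1.2 = c2.2 := by rw [h1, h2, hc']
        exact Prod.ext hc' this
    rw [hPcard wi] at hinj
    omega
  · -- zeros
    intro i hxi
    have hiT : i ∉ T := by
      intro hiT
      rw [Finset.mem_filter] at hiT
      rw [hiT.2] at hxi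
      exact Bool.noConfusion hxi
    by_cases hiNE : i ∈ NE
    · -- needy zero
      have hiS : i ∈ T ∪ NE := Finset.mem_union_right _ hiNE
      set wi : ↥(T ∪ NE) := ⟨i, hiS⟩ with hwi
      have hinj : (Finset.univ.filter (fun j : Fin t => (j, h j i) ∈ U)).card ≤
          ((Gam h {i}) \ (P wi)).card := by
        apply Finset.card_le_card_of_injOn (fun j => (j, h j i))
        · intro j hj
          have hjU : (j, h j i) ∈ U := (Finset.mem_filter.1 hj).2
          refine Finset.mem_sdiff.2 ⟨(hGamSingle i j (h j i)).2 rfl, ?_⟩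
          rcases Finset.mem_biUnion.1 hjU with ⟨w, _, hcw⟩
          by_cases hwT : w.val ∈ T
          · rw [if_pos hwT] at hcw
            have hwne : w ≠ wi := by
              intro hww
              rw [hww] at hwT
              exact hiT hwT
            exact hPdisj w wi hwne _ hcw
          · rw [if_neg hwT] at hcw
            exact absurd hcw (Finset.notMem_empty _)
        · intro j1 _ j2 _ hj
          exact congrArg Prod.fst hj
      have hcard : ((Gam h {i}) \ (P wi)).card = Lp := by
        rw [Finset.card_sdiff_of_subset (hPsub wi), Gam_singleton_card, hPcard]
        omega
      rw [hcard] at hinj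
      omega
    · -- non-needy zero
      have hdle : d i ≤ 8*Lp := by
        by_contra hgt
        push_neg at hgt
        exact hiNE (Finset.mem_filter.2 ⟨Finset.mem_univ _, hiT, hgt⟩)
      have hinj : (Finset.univ.filter (fun j : Fin t => (j, h j i) ∈ U)).card ≤
          ((Gam h {i}) ∩ (Gam h T)).card := by
        apply Finset.card_le_card_of_injOn (fun j => (j, h j i))
        · intro j hj
          have hjU : (j, h j i) ∈ U := (Finset.mem_filter.1 hj).2
          exact Finset.mem_inter.2 ⟨(hGamSingle i j (h j i)).2 rfl, hUsubT hjU⟩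
        · intro j1 _ j2 _ hj
          exact congrArg Prod.fst hj
      calc (Finset.univ.filter (fun j : Fin t => (j, h j i) ∈ U)).card
          ≤ ((Gam h {i}) ∩ (Gam h T)).card := hinj
        _ = d i := rfl
        _ ≤ 8*Lp := hdle
end encoding

/-- Hamming weight of a bit string. -/
def wt {n : ℕ} (y : Fin n → Bool) : ℕ := (Finset.univ.filter (fun i => y i = true)).card

/-- Inner product mod 2 of two bit strings, as an element of `ZMod 2`. -/
def ip {n : ℕ} (x y : Fin n → Bool) : ZMod 2 := ∑ i, if x i && y i then 1 else 0

/-- The sequence of answers obtained by the (adaptive) decoder probing the string `y`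
on query `q` with seed `s`: the `k`-th probe position may depend on the query, the seed,
and the previous `k` answers. -/
def runAns {N p : ℕ} {Q S : Type} (probe : (k : Fin p) → Q → S → (Fin k.val → Bool) → Fin N)
    (y : Fin N → Bool) (q : Q) (s : S) : (k : Fin p) → Bool
  | k => y (probe k q s (fun j => runAns probe y q s ⟨j.val, j.isLt.trans k.isLt⟩))
  termination_by k => k.val

/-- A `(p,δ,ε)`-error-correcting data structure of length `N` for `f : D → Q → A`:
an encoding `enc : D → {0,1}^N` together with a randomized decoder (seed set `Fin seeds`,
adaptive probe-choice functions, and an output function) such that for every query `q`,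
every data item `x`, and every `y ∈ {0,1}^N` within Hamming distance `δN` of `enc x`,
the decoder outputs `f x q` with probability at least `1 - ε` over a uniform seed. -/
structure ECDS (D Q A : Type) [DecidableEq A] (p N : ℕ) (δ ε : ℝ) (f : D → Q → A) where
  enc : D → (Fin N → Bool)
  seeds : ℕ
  seeds_pos : 0 < seeds
  probe : (k : Fin p) → Q → Fin seeds → (Fin k.val → Bool) → Fin N
  out : Q → Fin seeds → (Fin p → Bool) → A
  correct : ∀ (q : Q) (x : D) (y : Fin N → Bool),
    (hammingDist y (enc x) : ℝ) ≤ δ * N →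
    (1 - ε) * (seeds : ℝ) ≤
      ((Finset.univ.filter (fun s : Fin seeds =>
        out q s (runAns probe y q s) = f x q)).card : ℝ)

/-- Building the data structure from a good hash system. -/
lemma buildECDS (n s : ℕ) (hn : 2 ≤ n) (hs : 0 < s) (hsn : s ≤ n) :
    Nonempty (ECDS {x : Fin n → Bool // wt x ≤ s} (Fin n) Bool 1
      (64*(Nat.clog 2 n + 2)*(2^70*s)) ((1/2^80 : ℝ)/s) (1/4)
      (fun x i => x.val i)) := by
  classical
  set Lp := Nat.clog 2 n + 2 with hLpdef
  set t := 64*Lp with htdef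
  set b := 2^70*s with hbdef
  have hLp1 : 1 ≤ Lp := by omega
  obtain ⟨h, hgood0⟩ := exists_good n s hn hs hsn
  have hgood : ∀ S : Finset (Fin n), S.Nonempty → S.card ≤ 2*s →
      t*S.card < (Gam h S).card + Lp*S.card := by
    intro S h1 h2
    have h3 := hgood0 S h1 h2
    have e1 : Lp * S.card = (Nat.clog 2 n + 2) * S.card := rfl
    have e2 : t * S.card = (64*(Nat.clog 2 n + 2)) * S.card := rfl
    omega
  -- the encoding sets
  have hUex : ∀ x : {x : Fin n → Bool // wt x ≤ s},
      ∃ U : Finset (Fin t × Fin b),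
        (∀ i, x.val i = true →
          t ≤ (Finset.univ.filter (fun j : Fin t => (j, h j i) ∈ U)).card + Lp) ∧
        (∀ i, x.val i = false →
          (Finset.univ.filter (fun j : Fin t => (j, h j i) ∈ U)).card ≤ 8*Lp) := by
    intro x
    exact encode h hs hLp1 rfl hgood x.val x.2
  set Ux : {x : Fin n → Bool // wt x ≤ s} → Finset (Fin t × Fin b) :=
    fun x => Classical.choose (hUex x) with hUx
  set pe : Fin t × Fin b ≃ Fin (t*b) := finProdFinEquiv with hpe
  refine ⟨{
    enc := fun x => fun pos => decide ((pe.symm pos) ∈ Ux x)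
    seeds := t
    seeds_pos := by positivity
    probe := fun _ q j _ => pe (j, h j q)
    out := fun _ _ a => a 0
    correct := ?_ }⟩
  intro q x y hdist
  show (1 - 1/4 : ℝ) * (t : ℝ) ≤ ((Finset.univ.filter (fun j : Fin t =>
      (runAns (p := 1) (fun _ q j _ => pe (j, h j q)) y q j) 0 = x.val q)).card : ℝ)
  obtain ⟨hones, hzeros⟩ := Classical.choose_spec (hUex x)
  set U := Ux x with hUdef
  set encx : Fin (t*b) → Bool := fun pos => decide ((pe.symm pos) ∈ U) with hencx
  -- the decoder's output is the probed bit
  have hkey : ∀ j : Fin t,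
      (runAns (p := 1) (fun _ q j _ => pe (j, h j q)) y q j) 0 = y (pe (j, h j q)) := by
    intro j
    rw [runAns]
  have hbit : ∀ j : Fin t, encx (pe (j, h j q)) = decide ((j, h j q) ∈ U) := by
    intro j
    rw [hencx]
    simp only [Equiv.symm_apply_apply]
  set SB := Finset.univ.filter (fun j : Fin t => ¬ (encx (pe (j, h j q)) = x.val q)) with hSB
  set CORR := Finset.univ.filter (fun j : Fin t => y (pe (j, h j q)) ≠ encx (pe (j, h j q)))
    with hCORR
  -- the good set contains the complement of SB ∪ CORR
  have hsubset : (Finset.univ \ (SB ∪ CORR)) ⊆ Finset.univ.filter (fun j : Fin t =>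
      (runAns (p := 1) (fun _ q j _ => pe (j, h j q)) y q j) 0 = x.val q) := by
    intro j hj
    rcases Finset.mem_sdiff.1 hj with ⟨-, hnot⟩
    rw [Finset.mem_union] at hnot
    push_neg at hnot
    obtain ⟨h1, h2⟩ := hnot
    rw [hSB, Finset.mem_filter] at h1
    rw [hCORR, Finset.mem_filter] at h2
    push_neg at h1 h2
    refine Finset.mem_filter.2 ⟨Finset.mem_univ _, ?_⟩
    rw [hkey j, h2 (Finset.mem_univ _), h1 (Finset.mem_univ _)]
  -- |SB| ≤ 8 Lp
  have hSBcard : SB.card ≤ 8*Lp := by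
    rcases Bool.eq_false_or_eq_true (x.val q) with hxq | hxq
    · -- one query
      have hsb : SB ⊆ Finset.univ \ (Finset.univ.filter (fun j : Fin t => (j, h j q) ∈ U)) := by
        intro j hj
        rw [hSB, Finset.mem_filter] at hj
        refine Finset.mem_sdiff.2 ⟨Finset.mem_univ _, ?_⟩
        intro hmem
        rw [Finset.mem_filter] at hmem
        apply hj.2
        rw [hbit j, hxq]
        simp [hmem.2]
      have h1 : t ≤ (Finset.univ.filter (fun j : Fin t => (j, h j q) ∈ U)).card + Lp :=
        hones q hxq
      calc SB.card ≤ _ := Finset.card_le_card hsb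
        _ = t - (Finset.univ.filter (fun j : Fin t => (j, h j q) ∈ U)).card := by
            rw [Finset.card_sdiff_of_subset (Finset.subset_univ _), Finset.card_univ, Fintype.card_fin]
        _ ≤ Lp := by omega
        _ ≤ 8*Lp := by omega
    · -- zero query
      have hsb : SB ⊆ Finset.univ.filter (fun j : Fin t => (j, h j q) ∈ U) := by
        intro j hj
        rw [hSB, Finset.mem_filter] at hj
        refine Finset.mem_filter.2 ⟨Finset.mem_univ _, ?_⟩
        have h2 := hj.2
        rw [hbit j, hxq] at h2
        by_contra hmem
        exact h2 (by simp [hmem])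
      calc SB.card ≤ _ := Finset.card_le_card hsb
        _ ≤ 8*Lp := hzeros q hxq
  -- |CORR| ≤ hammingDist
  have hCORRcard : CORR.card ≤ hammingDist y encx := by
    have : hammingDist y encx =
        (Finset.univ.filter (fun pos : Fin (t*b) => y pos ≠ encx pos)).card := rfl
    rw [this]
    apply Finset.card_le_card_of_injOn (fun j => pe (j, h j q))
    · intro j hj
      rw [hCORR, Finset.mem_coe, Finset.mem_filter] at hj
      exact Finset.mem_filter.2 ⟨Finset.mem_univ _, hj.2⟩
    · intro j1 _ j2 _ hj
      have := pe.injective hj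
      exact congrArg Prod.fst this
  -- counting
  have hcount : t ≤ (Finset.univ.filter (fun j : Fin t =>
      (runAns (p := 1) (fun _ q j _ => pe (j, h j q)) y q j) 0 = x.val q)).card
      + SB.card + CORR.card := by
    have h1 := Finset.card_le_card hsubset
    have h2 : (Finset.univ \ (SB ∪ CORR)).card
        = t - (SB ∪ CORR).card := by
      rw [Finset.card_sdiff_of_subset (Finset.subset_univ _), Finset.card_univ, Fintype.card_fin]
    have h3 : (SB ∪ CORR).card ≤ SB.card + CORR.card := Finset.card_union_le _ _
    omega
  -- real arithmetic
  have hdist' : (hammingDist y encx : ℝ) ≤ (Lp : ℝ)/16 := by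
    have heq : ((1/2^80 : ℝ)/s) * ((t*b : ℕ) : ℝ) = (Lp : ℝ)/16 := by
      have hs0 : (s:ℝ) ≠ 0 := by positivity
      push_cast [htdef, hbdef]
      field_simp
      ring
    calc (hammingDist y encx : ℝ) ≤ ((1/2^80 : ℝ)/s) * ((t*b : ℕ) : ℝ) := hdist
      _ = (Lp : ℝ)/16 := heq
  have hLpR : (0:ℝ) ≤ (Lp:ℝ) := by positivity
  have hSBR : (SB.card : ℝ) ≤ 8*(Lp:ℝ) := by exact_mod_cast hSBcard
  have hCORRR : (CORR.card : ℝ) ≤ (Lp:ℝ)/16 :=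
    le_trans (by exact_mod_cast hCORRcard) hdist'
  have hcountR : (t:ℝ) ≤ ((Finset.univ.filter (fun j : Fin t =>
      (runAns (p := 1) (fun _ q j _ => pe (j, h j q)) y q j) 0 = x.val q)).card : ℝ)
      + SB.card + CORR.card := by exact_mod_cast hcount
  have htR : (t:ℝ) = 64*(Lp:ℝ) := by rw [htdef]; push_cast; ring
  have : (1 - 1/4 : ℝ) * (t:ℝ) ≤ ((Finset.univ.filter (fun j : Fin t =>
      (runAns (p := 1) (fun _ q j _ => pe (j, h j q)) y q j) 0 = x.val q)).card : ℝ) := by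
    rw [htR] at hcountR ⊢
    linarith
  exact this

/-- There are universal constants `c, C > 0` such that for all `n ≥ 2` and
`1 ≤ s ≤ n` there is a `(1, c/s, 1/4)`-error-correcting data structure for the
`s`-out-of-`n` Membership problem of length at most `C·s·log₂ n`. -/
theorem one_probe_membership_ecds_exists :
    ∃ c C : ℝ, 0 < c ∧ 0 < C ∧
      ∀ n s : ℕ, 2 ≤ n → 0 < s → s ≤ n →
        ∃ N : ℕ, (N : ℝ) ≤ C * s * Real.logb 2 n ∧
          Nonempty (ECDS {x : Fin n → Bool // wt x ≤ s} (Fin n) Bool 1 N (c / s) (1 / 4)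
            (fun x i => x.val i)) := by
  refine ⟨1/2^80, 2^80, by norm_num, by norm_num, ?_⟩
  intro n s hn hs hsn
  refine ⟨64*(Nat.clog 2 n + 2)*(2^70*s), ?_, buildECDS n s hn hs hsn⟩
  set L := Nat.clog 2 n with hL
  have hlogb1 : (1:ℝ) ≤ Real.logb 2 n := by
    have h2 : Real.logb 2 2 = 1 := Real.logb_self_eq_one (by norm_num)
    calc (1:ℝ) = Real.logb 2 2 := h2.symm
      _ ≤ Real.logb 2 n :=
        Real.logb_le_logb_of_le (by norm_num) (by norm_num) (by exact_mod_cast hn)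
  have hLpos : 0 < L := by
    by_contra h0
    push_neg at h0
    interval_cases L
    · have := Nat.le_pow_clog (b := 2) (by norm_num) n
      rw [← hL] at this
      simp at this
      omega
  have h2L : (2:ℕ)^L ≤ 2*n := by
    have hp : (2:ℕ)^(L-1) < n := by
      have := Nat.pow_pred_clog_lt_self (b := 2) (by norm_num) (x := n) (by omega)
      rwa [← hL] at this
    have h2 : (2:ℕ)^L = 2*2^(L-1) := by
      rw [← pow_succ']
      congr 1
      omega
    omega
  have hLle : (L:ℝ) ≤ 2 * Real.logb 2 n := by
    have h1 : ((2:ℝ))^L ≤ (n:ℝ)^2 := by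
      have hnn : (2:ℕ)^L ≤ n*n := by
        calc (2:ℕ)^L ≤ 2*n := h2L
          _ ≤ n*n := Nat.mul_le_mul hn le_rfl
      have := (Nat.cast_le (α := ℝ)).2 hnn
      push_cast at this
      calc ((2:ℝ))^L ≤ (n:ℝ)*(n:ℝ) := this
        _ = (n:ℝ)^2 := by ring
    calc (L:ℝ) = Real.logb 2 ((2:ℝ)^L) := by
          rw [Real.logb_pow, Real.logb_self_eq_one (by norm_num)]
          ring
      _ ≤ Real.logb 2 ((n:ℝ)^2) :=
          Real.logb_le_logb_of_le (by norm_num) (by positivity) h1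
      _ = 2 * Real.logb 2 n := by
          rw [Real.logb_pow]
          push_cast
          ring
  have hsR : (1:ℝ) ≤ (s:ℝ) := by exact_mod_cast hs
  push_cast
  have hnum : (1180591620717411303424:ℝ) = 2^70 := by norm_num
  rw [hnum]
  have hL2 : (L:ℝ) + 2 ≤ 4 * Real.logb 2 n := by linarith
  calc (64*((L:ℝ)+2)*(2^70*(s:ℝ)))
      ≤ 64*(4 * Real.logb 2 n)*(2^70*(s:ℝ)) := by
        apply mul_le_mul_of_nonneg_right
        · apply mul_le_mul_of_nonneg_left hL2
          norm_num
        · positivity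
    _ = 2^78 * (s:ℝ) * Real.logb 2 n := by ring
    _ ≤ 2^80 * (s:ℝ) * Real.logb 2 n := by
        apply mul_le_mul_of_nonneg_right
        apply mul_le_mul_of_nonneg_right
        · norm_num
        · positivity
        · linarith
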